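/- arXiv:0704.0111 — 4 statements merged into one kernel-verified Lean document; each statement's English description precedes it below -/
import Mathlib

section
/- Let A be a Hopf algebra over ℂ, let ξ : A → ℂ be a linear functional and let τ : A → ℂ be a trace (i.e. τ(ab) = τ(ba) for all a, b ∈ A). Then (∂ξ) * τ = ∂(ξ * τ), where ∂ is the Hochschild coboundary from linear to bilinear functionals, (∂η)(a,b) = η(ab) − η(ba). Explicitly, for all a₀, a₁ ∈ A: ((∂ξ) * τ)(a₀, a₁) = (ξ * τ)(a₀a₁) − (ξ * τ)(a₁a₀). -/
open TensorProduct

/-- Let `A` be a Hopf algebra over `ℂ`, `ξ : A → ℂ` a linear functional and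
`τ : A → ℂ` a trace (`τ (a*b) = τ (b*a)`).  Writing the comultiplications of `a₀` and `a₁` in
Sweedler form `Δ a₀ = ∑ i ∈ s, x i ⊗ x' i` and `Δ a₁ = ∑ j ∈ t, y j ⊗ y' j`, the convolution of
the Hochschild coboundary `∂ξ` (with `(∂ξ)(a,b) = ξ(ab) - ξ(ba)`) with `τ` satisfies
`(∂ξ) * τ = ∂(ξ * τ)`; explicitly, using that `Δ(a₀a₁) = ∑ x i * y j ⊗ x' i * y' j` and
`Δ(a₁a₀) = ∑ y j * x i ⊗ y' j * x' i`,
`((∂ξ) * τ)(a₀,a₁) = (ξ * τ)(a₀a₁) - (ξ * τ)(a₁a₀)`. -/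
theorem statement0 {A : Type*} [Ring A] [HopfAlgebra ℂ A]
    (ξ τ : A →ₗ[ℂ] ℂ) (hτ : ∀ a b : A, τ (a * b) = τ (b * a))
    (a₀ a₁ : A) {ι κ : Type*} (s : Finset ι) (t : Finset κ)
    (x x' : ι → A) (y y' : κ → A)
    (h₀ : Coalgebra.comul (R := ℂ) a₀ = ∑ i ∈ s, x i ⊗ₜ[ℂ] x' i)
    (h₁ : Coalgebra.comul (R := ℂ) a₁ = ∑ j ∈ t, y j ⊗ₜ[ℂ] y' j) :
    (∑ i ∈ s, ∑ j ∈ t, (ξ (x i * y j) - ξ (y j * x i)) * τ (x' i * y' j))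
      = (∑ i ∈ s, ∑ j ∈ t, ξ (x i * y j) * τ (x' i * y' j))
        - (∑ i ∈ s, ∑ j ∈ t, ξ (y j * x i) * τ (y' j * x' i)) := by
  simp only [sub_mul, Finset.sum_sub_distrib]
  congr 1
  exact Finset.sum_congr rfl fun i _ => Finset.sum_congr rfl fun j _ => by rw [hτ]
end

section
/- Let A be a unital associative algebra over ℂ and σ an algebra automorphism of A. Then B and b anticommute on σ-invariant cochains: for every n ≥ 1 and every σ-invariant (n+1)-linear functional f on A, B_{n+1}(b_n f) + b_{n−1}(B_n f) = 0, where B_n = N_{n−1} U_n (T_n − I) and b_n = Σ_{j=0}^{n+1} T_{n+1}^{n+1−j} V_n T_nʲ. -/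
variable {A : Type*} [Ring A] [Algebra ℂ A]

/-- A (not necessarily multilinear) `m`-cochain `f : A^m → ℂ` is `σ`-invariant if
`f(σ(a₀), …, σ(a_{m-1})) = f(a₀, …, a_{m-1})`. -/
def TwistedInvariant (σ : A ≃ₐ[ℂ] A) {m : ℕ} (f : (Fin m → A) → ℂ) : Prop :=
  ∀ a : Fin m → A, f (fun i => σ (a i)) = f a

/-- The twisted cyclic permutation operator
`(T_n f)(a₀, …, a_n) = (-1)^n f(σ(a_n), a₀, …, a_{n-1})`. -/
noncomputable def Tcyc (σ : A ≃ₐ[ℂ] A) (n : ℕ) (f : (Fin (n + 1) → A) → ℂ) :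
    (Fin (n + 1) → A) → ℂ :=
  fun a => (-1 : ℂ) ^ n * f (Fin.cases (σ (a (Fin.last n))) (fun i => a i.castSucc))

/-- The operator `(U_n f)(a₀, …, a_{n-1}) = (-1)^n f(a₀, …, a_{n-1}, 1)`. -/
def Ucyc (n : ℕ) (f : (Fin (n + 1) → A) → ℂ) : (Fin n → A) → ℂ :=
  fun a => (-1 : ℂ) ^ n * f (Fin.snoc a 1)

/-- The operator `(V_n f)(a₀, …, a_{n+1}) = (-1)^(n+1) f(σ(a_{n+1})a₀, a₁, …, a_n)`. -/
noncomputable def Vcyc (σ : A ≃ₐ[ℂ] A) (n : ℕ) (f : (Fin (n + 1) → A) → ℂ) :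
    (Fin (n + 2) → A) → ℂ :=
  fun a => (-1 : ℂ) ^ (n + 1) *
    f (Fin.cases (σ (a (Fin.last (n + 1))) * a 0) (fun i : Fin n => a i.succ.castSucc))

/-- The operator `N_n = ∑_{j=0}^{n} T_n^j`. -/
noncomputable def Ncyc (σ : A ≃ₐ[ℂ] A) (n : ℕ) (f : (Fin (n + 1) → A) → ℂ) :
    (Fin (n + 1) → A) → ℂ :=
  fun a => ∑ j ∈ Finset.range (n + 1), (Tcyc σ n)^[j] f a

/-- The operator `B_{n+1} = N_n U_{n+1} (T_{n+1} - I) : C^{n+1} → C^n`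
(indexed here so that `Bcyc σ n` is the paper's `B_{n+1}`). -/
noncomputable def Bcyc (σ : A ≃ₐ[ℂ] A) (n : ℕ) (f : (Fin (n + 2) → A) → ℂ) :
    (Fin (n + 1) → A) → ℂ :=
  Ncyc σ n (Ucyc (n + 1) (Tcyc σ (n + 1) f - f))

/-- The operator `b_n = ∑_{j=0}^{n+1} T_{n+1}^{n+1-j} V_n T_n^j : C^n → C^{n+1}`. -/
noncomputable def bcyc (σ : A ≃ₐ[ℂ] A) (n : ℕ) (f : (Fin (n + 1) → A) → ℂ) :
    (Fin (n + 2) → A) → ℂ :=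
  fun a => ∑ j ∈ Finset.range (n + 2),
    (Tcyc σ (n + 1))^[n + 1 - j] (Vcyc σ n ((Tcyc σ n)^[j] f)) a

namespace S9
open Fin.NatCast
variable (σ : A ≃ₐ[ℂ] A)

/-- the twisted rotation of a tuple -/
def rotσ (k : ℕ) (a : Fin (k + 1) → A) : Fin (k + 1) → A :=
  Fin.cases (σ (a (Fin.last k))) (fun i => a i.castSucc)

lemma Tcyc_apply (k : ℕ) (f : (Fin (k + 1) → A) → ℂ) (a : Fin (k + 1) → A) :
    Tcyc σ k f a = (-1 : ℂ) ^ k * f (rotσ σ k a) := rfl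

lemma sub_val (k : ℕ) (x : Fin (k + 1)) (j : ℕ) (hj : j ≤ k) :
    ((x - (j : Fin (k + 1))) : Fin (k + 1)).val =
      if (x : ℕ) < j then (x : ℕ) + (k + 1) - j else (x : ℕ) - j := by
  have hjlt : j < k + 1 := by omega
  simp only [Fin.sub_def, Fin.val_cast_of_lt hjlt]
  rcases Nat.lt_or_ge (x : ℕ) j with h | h
  · rw [if_pos h, Nat.mod_eq_of_lt (by omega)]
    omega
  · rw [if_neg (by omega)]
    have e : k + 1 - j + (x : ℕ) = ((x : ℕ) - j) + (k + 1) := by omega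
    rw [e, Nat.add_mod_right, Nat.mod_eq_of_lt (by omega)]

lemma rotσ_iter (k : ℕ) : ∀ j, j ≤ k → ∀ (a : Fin (k + 1) → A) (i : Fin (k + 1)),
    (rotσ σ k)^[j] a i =
      if (i : ℕ) < j then σ (a (i - (j : Fin (k + 1)))) else a (i - (j : Fin (k + 1))) := by
  intro j
  induction j with
  | zero => intro _ a i; simp
  | succ j ih =>
    intro hj a i
    have hjk : j ≤ k := by omega
    rw [Function.iterate_succ_apply']
    have hcast : (((j : ℕ) + 1 : ℕ) : Fin (k + 1)) = (j : Fin (k+1)) + 1 := by push_cast; ring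
    induction i using Fin.cases with
    | zero =>
      have h1 : (rotσ σ k) ((rotσ σ k)^[j] a) 0 = σ (((rotσ σ k)^[j] a) (Fin.last k)) := rfl
      rw [h1, ih (by omega)]
      rw [if_neg (by simp [Fin.val_last]; omega), if_pos (by simp)]
      congr 2
      apply Fin.ext
      rw [sub_val k _ j hjk, sub_val k _ (j+1) hj]
      simp [Fin.val_last]
      omega
    | succ t =>
      have h1 : (rotσ σ k) ((rotσ σ k)^[j] a) t.succ = ((rotσ σ k)^[j] a) t.castSucc := rfl
      rw [h1, ih (by omega)]
      have hidx : t.castSucc - ((j : ℕ) : Fin (k+1)) = t.succ - ((j + 1 : ℕ) : Fin (k+1)) := by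
        apply Fin.ext
        rw [sub_val k _ j hjk, sub_val k _ (j+1) hj]
        simp only [Fin.val_succ, Fin.coe_castSucc]
        by_cases h : (t : ℕ) < j
        · rw [if_pos h, if_pos (by omega)]; omega
        · rw [if_neg h, if_neg (by omega)]; omega
      have hcond : ((t.castSucc : ℕ) < j) = ((t.succ : ℕ) < j + 1) := by
        simp [Fin.val_succ, Fin.coe_castSucc]
      rw [hidx]
      push_cast
      by_cases h : (t.castSucc : ℕ) < j
      · rw [if_pos h, if_pos (by simp only [Fin.val_succ]; simp only [Fin.coe_castSucc] at h; omega)]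
      · rw [if_neg h, if_neg (by simp only [Fin.val_succ]; simp only [Fin.coe_castSucc] at h; omega)]

lemma rotσ_order (k : ℕ) (a : Fin (k + 1) → A) :
    (rotσ σ k)^[k + 1] a = fun i => σ (a i) := by
  funext i
  rw [Function.iterate_succ_apply']
  induction i using Fin.cases with
  | zero =>
    have h1 : (rotσ σ k) ((rotσ σ k)^[k] a) 0 = σ (((rotσ σ k)^[k] a) (Fin.last k)) := rfl
    rw [h1, rotσ_iter σ k k (le_refl _), if_neg (by simp [Fin.val_last])]
    have hidx : Fin.last k - ((k : ℕ) : Fin (k+1)) = 0 := by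
      apply Fin.ext
      rw [sub_val k _ k (le_refl _)]
      simp [Fin.val_last]
    rw [hidx]
  | succ t =>
    have h1 : (rotσ σ k) ((rotσ σ k)^[k] a) t.succ = ((rotσ σ k)^[k] a) t.castSucc := rfl
    rw [h1, rotσ_iter σ k k (le_refl _), if_pos (by simp only [Fin.coe_castSucc]; exact t.isLt)]
    have hidx : t.castSucc - ((k : ℕ) : Fin (k+1)) = t.succ := by
      apply Fin.ext
      rw [sub_val k _ k (le_refl _), if_pos (by simp only [Fin.coe_castSucc]; exact t.isLt)]
      simp only [Fin.val_succ, Fin.coe_castSucc]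
      omega
    rw [hidx]

lemma Tcyc_iter_apply (k : ℕ) (f : (Fin (k + 1) → A) → ℂ) (j : ℕ) (a : Fin (k + 1) → A) :
    (Tcyc σ k)^[j] f a = (-1 : ℂ) ^ (k * j) * f ((rotσ σ k)^[j] a) := by
  induction j generalizing a with
  | zero => simp
  | succ j ih =>
    rw [Function.iterate_succ_apply', Tcyc_apply, ih,
      show (rotσ σ k)^[j] (rotσ σ k a) = (rotσ σ k)^[j+1] a from
        (Function.iterate_succ_apply (rotσ σ k) j a).symm,
      Nat.mul_succ, pow_add]
    ring


lemma rotσ_sigma (k : ℕ) (a : Fin (k + 1) → A) :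
    rotσ σ k (fun i => σ (a i)) = fun i => σ (rotσ σ k a i) := by
  funext i
  induction i using Fin.cases with
  | zero => rfl
  | succ t => rfl

lemma Tcyc_inv (k : ℕ) (f : (Fin (k + 1) → A) → ℂ) (hf : TwistedInvariant σ f) :
    TwistedInvariant σ (Tcyc σ k f) := by
  intro a
  rw [Tcyc_apply, Tcyc_apply, rotσ_sigma, hf]

lemma Tcyc_iter_inv (k : ℕ) (f : (Fin (k + 1) → A) → ℂ) (hf : TwistedInvariant σ f) (j : ℕ) :
    TwistedInvariant σ ((Tcyc σ k)^[j] f) := by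
  induction j with
  | zero => exact hf
  | succ j ih => rw [Function.iterate_succ_apply']; exact Tcyc_inv σ k _ ih

lemma Tcyc_order (k : ℕ) (f : (Fin (k + 1) → A) → ℂ) (hf : TwistedInvariant σ f) :
    (Tcyc σ k)^[k + 1] f = f := by
  funext a
  rw [Tcyc_iter_apply, rotσ_order, hf a, Even.neg_one_pow (Nat.even_mul_succ_self k), one_mul]

lemma Tcyc_sub (k : ℕ) (f g : (Fin (k + 1) → A) → ℂ) :
    Tcyc σ k (f - g) = Tcyc σ k f - Tcyc σ k g := by
  funext a
  simp [Tcyc_apply, mul_sub]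

lemma Tcyc_add (k : ℕ) (f g : (Fin (k + 1) → A) → ℂ) :
    Tcyc σ k (f + g) = Tcyc σ k f + Tcyc σ k g := by
  funext a
  simp [Tcyc_apply, mul_add]

lemma Tcyc_smul (k : ℕ) (c : ℂ) (f : (Fin (k + 1) → A) → ℂ) :
    Tcyc σ k (c • f) = c • Tcyc σ k f := by
  funext a
  simp [Tcyc_apply, smul_eq_mul]
  ring

lemma Tcyc_iter_sub (k : ℕ) (j : ℕ) (f g : (Fin (k + 1) → A) → ℂ) :
    (Tcyc σ k)^[j] (f - g) = (Tcyc σ k)^[j] f - (Tcyc σ k)^[j] g := by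
  induction j generalizing f g with
  | zero => rfl
  | succ j ih => rw [Function.iterate_succ_apply, Function.iterate_succ_apply,
      Function.iterate_succ_apply, Tcyc_sub, ih]

lemma Tcyc_iter_smul (k : ℕ) (j : ℕ) (c : ℂ) (f : (Fin (k + 1) → A) → ℂ) :
    (Tcyc σ k)^[j] (c • f) = c • (Tcyc σ k)^[j] f := by
  induction j generalizing f with
  | zero => rfl
  | succ j ih => rw [Function.iterate_succ_apply, Function.iterate_succ_apply, Tcyc_smul, ih]

lemma Ncyc_apply (k : ℕ) (f : (Fin (k + 1) → A) → ℂ) (a : Fin (k + 1) → A) :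
    Ncyc σ k f a = ∑ j ∈ Finset.range (k + 1), (Tcyc σ k)^[j] f a := rfl

lemma Ncyc_sub (k : ℕ) (f g : (Fin (k + 1) → A) → ℂ) :
    Ncyc σ k (f - g) = Ncyc σ k f - Ncyc σ k g := by
  funext a
  simp [Ncyc_apply, Tcyc_iter_sub, Finset.sum_sub_distrib]

lemma Ncyc_smul (k : ℕ) (c : ℂ) (f : (Fin (k + 1) → A) → ℂ) :
    Ncyc σ k (c • f) = c • Ncyc σ k f := by
  funext a
  simp [Ncyc_apply, Tcyc_iter_smul, Finset.mul_sum]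

lemma Ncyc_inv (k : ℕ) (f : (Fin (k + 1) → A) → ℂ) (hf : TwistedInvariant σ f) :
    TwistedInvariant σ (Ncyc σ k f) := by
  intro a
  simp only [Ncyc_apply]
  exact Finset.sum_congr rfl (fun j _ => Tcyc_iter_inv σ k f hf j a)

lemma Ncyc_T (k : ℕ) (f : (Fin (k + 1) → A) → ℂ) (hf : TwistedInvariant σ f) :
    Ncyc σ k (Tcyc σ k f) = Ncyc σ k f := by
  funext a
  simp only [Ncyc_apply]
  have h1 : ∀ j, (Tcyc σ k)^[j] (Tcyc σ k f) = (Tcyc σ k)^[j + 1] f := by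
    intro j; rw [Function.iterate_succ_apply]
  calc ∑ j ∈ Finset.range (k + 1), (Tcyc σ k)^[j] (Tcyc σ k f) a
      = ∑ j ∈ Finset.range (k + 1), (Tcyc σ k)^[j + 1] f a := by
        exact Finset.sum_congr rfl (fun j _ => by rw [h1])
    _ = ∑ j ∈ Finset.range k, (Tcyc σ k)^[j + 1] f a + (Tcyc σ k)^[k + 1] f a :=
        Finset.sum_range_succ _ k
    _ = ∑ j ∈ Finset.range k, (Tcyc σ k)^[j + 1] f a + f a := by rw [Tcyc_order σ k f hf]
    _ = ∑ j ∈ Finset.range (k + 1), (Tcyc σ k)^[j] f a := by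
        rw [Finset.sum_range_succ' (fun j => (Tcyc σ k)^[j] f a) k]
        rfl

lemma Ncyc_Titer (k : ℕ) (f : (Fin (k + 1) → A) → ℂ) (hf : TwistedInvariant σ f) (s : ℕ) :
    Ncyc σ k ((Tcyc σ k)^[s] f) = Ncyc σ k f := by
  induction s with
  | zero => rfl
  | succ s ih =>
    rw [Function.iterate_succ_apply', Ncyc_T σ k _ (Tcyc_iter_inv σ k f hf s), ih]

/-- untwisted face `d_i` (contract at position `i`), as an operation on cochains -/
def dfc (k i : ℕ) (f : (Fin (k + 1) → A) → ℂ) : (Fin (k + 2) → A) → ℂ :=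
  fun a => f (fun j => if (j : ℕ) < i then a j.castSucc
    else if (j : ℕ) = i then a j.castSucc * a j.succ else a j.succ)

/-- the twisted top face -/
def dtw (k : ℕ) (f : (Fin (k + 1) → A) → ℂ) : (Fin (k + 2) → A) → ℂ :=
  fun a => f (Fin.cases (σ (a (Fin.last (k + 1))) * a 0) (fun i : Fin k => a i.succ.castSucc))

/-- insert `1` in front -/
def Etil (k : ℕ) (f : (Fin (k + 2) → A) → ℂ) : (Fin (k + 1) → A) → ℂ :=
  fun a => f (Fin.cases 1 a)

/-- append `1` at the end (unsigned) -/
def util (k : ℕ) (f : (Fin (k + 2) → A) → ℂ) : (Fin (k + 1) → A) → ℂ :=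
  fun a => f (Fin.snoc a 1)

lemma BT (k : ℕ) (f : (Fin (k + 1) → A) → ℂ) :
    Tcyc σ (k + 1) (dfc k 0 f) = ((-1 : ℂ) ^ (k + 1)) • dtw σ k f := by
  funext a
  simp only [Tcyc_apply, dfc, dtw, Pi.smul_apply, smul_eq_mul]
  congr 2
  funext j
  induction j using Fin.cases with
  | zero =>
    simp only [Fin.val_zero, Nat.lt_irrefl, if_false, if_pos rfl, Fin.castSucc_zero]
    have h1 : (rotσ σ (k+1) a) 0 = σ (a (Fin.last (k+1))) := rfl
    have h2 : (rotσ σ (k+1) a) ((0 : Fin (k+1)).succ) = a ((0 : Fin (k+1)).castSucc) := rfl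
    rw [h1, h2]
    simp
  | succ t =>
    simp only [Fin.val_succ, Fin.cases_succ]
    rw [if_neg (by omega), if_neg (by omega)]
    have h2 : (rotσ σ (k+1) a) ((t.succ : Fin (k+1)).succ) = a ((t.succ).castSucc) := rfl
    rw [h2]

lemma F3 (k i : ℕ) (hik : i < k) (f : (Fin (k + 1) → A) → ℂ) :
    Tcyc σ (k + 1) (dfc k (i + 1) f) = - dfc k i (Tcyc σ k f) := by
  funext a
  simp only [Tcyc_apply, dfc, Pi.neg_apply, pow_succ]
  rw [show ((-1:ℂ)^k * -1) * f _ = -((-1:ℂ)^k * f _) by ring]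
  congr 2
  apply congrArg
  funext j
  induction j using Fin.cases with
  | zero =>
    rw [if_pos (by simp), Fin.castSucc_zero]
    have h1 : (rotσ σ (k+1) a) 0 = σ (a (Fin.last (k+1))) := rfl
    rw [h1]
    have h2 : (rotσ σ k fun j : Fin (k+1) => if (j : ℕ) < i then a j.castSucc
        else if (j : ℕ) = i then a j.castSucc * a j.succ else a j.succ) 0
        = σ (if ((Fin.last k : Fin (k+1)) : ℕ) < i then a (Fin.last k).castSucc
          else if ((Fin.last k : Fin (k+1)) : ℕ) = i then a (Fin.last k).castSucc * a (Fin.last k).succ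
          else a (Fin.last k).succ) := rfl
    rw [h2, if_neg (by simp [Fin.val_last]; omega), if_neg (by simp [Fin.val_last]; omega)]
    rfl
  | succ t =>
    have hrotsucc : ∀ x : Fin (k+1), (rotσ σ (k+1) a) (x.succ) = a x.castSucc := fun _ => rfl
    have hrotsucc' : ∀ x : Fin k,
        (rotσ σ k fun j : Fin (k+1) => if (j : ℕ) < i then a j.castSucc
          else if (j : ℕ) = i then a j.castSucc * a j.succ else a j.succ) (x.succ)
        = (if ((x.castSucc : Fin (k+1)) : ℕ) < i then a x.castSucc.castSucc
          else if ((x.castSucc : Fin (k+1)) : ℕ) = i then a x.castSucc.castSucc * a x.castSucc.succ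
          else a x.castSucc.succ) := fun _ => rfl
    simp only [Fin.val_succ, Fin.cases_succ, hrotsucc']
    simp only [Fin.coe_castSucc]
    rcases Nat.lt_trichotomy (t : ℕ) i with h | h | h
    · rw [if_pos (by omega), if_pos h, ← Fin.succ_castSucc, hrotsucc]
    · rw [if_neg (by omega), if_pos (by omega), if_neg (by omega), if_pos h,
        ← Fin.succ_castSucc, hrotsucc, hrotsucc, Fin.succ_castSucc]
    · rw [if_neg (by omega), if_neg (by omega), if_neg (by omega), if_neg (by omega),
        hrotsucc, Fin.succ_castSucc]

lemma F4tw (k : ℕ) (f : (Fin (k + 1) → A) → ℂ) :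
    Tcyc σ (k + 1) (dtw σ k f) = - dfc k k (Tcyc σ k f) := by
  funext a
  simp only [Tcyc_apply, dtw, dfc, Pi.neg_apply, pow_succ]
  rw [show ((-1:ℂ)^k * -1) * f _ = -((-1:ℂ)^k * f _) by ring]
  congr 2
  apply congrArg
  funext j
  induction j using Fin.cases with
  | zero =>
    have h1 : (rotσ σ (k+1) a) (Fin.last (k+1)) = a (Fin.last k).castSucc := by
      rw [show Fin.last (k+1) = (Fin.last k).succ from rfl]
      rfl
    have h2 : (rotσ σ (k+1) a) 0 = σ (a (Fin.last (k+1))) := rfl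
    have h3 : (rotσ σ k fun j : Fin (k+1) => if (j : ℕ) < k then a j.castSucc
        else if (j : ℕ) = k then a j.castSucc * a j.succ else a j.succ) 0
        = σ (if ((Fin.last k : Fin (k+1)) : ℕ) < k then a (Fin.last k).castSucc
          else if ((Fin.last k : Fin (k+1)) : ℕ) = k then a (Fin.last k).castSucc * a (Fin.last k).succ
          else a (Fin.last k).succ) := rfl
    rw [show (Fin.cases (σ ((rotσ σ (k+1) a) (Fin.last (k+1))) * (rotσ σ (k+1) a) 0)
        (fun i : Fin k => (rotσ σ (k+1) a) i.succ.castSucc) (0 : Fin (k+1)))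
      = σ ((rotσ σ (k+1) a) (Fin.last (k+1))) * (rotσ σ (k+1) a) 0 from rfl]
    rw [h1, h2, h3, if_neg (by simp [Fin.val_last]), if_pos (by simp [Fin.val_last]), map_mul]
    rfl
  | succ t =>
    have h4 : (Fin.cases (σ ((rotσ σ (k+1) a) (Fin.last (k+1))) * (rotσ σ (k+1) a) 0)
        (fun i : Fin k => (rotσ σ (k+1) a) i.succ.castSucc) (t.succ))
      = (rotσ σ (k+1) a) t.succ.castSucc := by
      exact Fin.cases_succ t
    have h5 : (rotσ σ k fun j : Fin (k+1) => if (j : ℕ) < k then a j.castSucc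
        else if (j : ℕ) = k then a j.castSucc * a j.succ else a j.succ) (t.succ)
        = (if ((t.castSucc : Fin (k+1)) : ℕ) < k then a t.castSucc.castSucc
          else if ((t.castSucc : Fin (k+1)) : ℕ) = k then a t.castSucc.castSucc * a t.castSucc.succ
          else a t.castSucc.succ) := rfl
    rw [h4, h5]
    rw [if_pos (by simpa using t.isLt)]
    try rfl

lemma E0 (k : ℕ) (g : (Fin (k + 2) → A) → ℂ) :
    Etil (k + 1) (dfc (k + 1) 0 g) = g := by
  funext a
  simp only [Etil, dfc]
  apply congrArg
  funext j
  induction j using Fin.cases with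
  | zero =>
    simp only [Fin.val_zero, Nat.lt_irrefl, if_false, if_pos rfl, Fin.castSucc_zero,
      Fin.cases_zero]
    rw [show ((0 : Fin (k+2)).succ) = ((0 : Fin (k+2)).succ) from rfl, Fin.cases_succ]
    simp
  | succ t =>
    simp only [Fin.val_succ]
    rw [if_neg (by omega), if_neg (by omega), Fin.cases_succ]

lemma E1 (k i : ℕ) (hik : i ≤ k) (g : (Fin (k + 2) → A) → ℂ) :
    Etil (k + 1) (dfc (k + 1) (i + 1) g) = dfc k i (Etil k g) := by
  funext a
  simp only [Etil, dfc]
  apply congrArg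
  funext j
  induction j using Fin.cases with
  | zero =>
    rw [if_pos (by simp), Fin.castSucc_zero, Fin.cases_zero, Fin.cases_zero]
  | succ t =>
    simp only [Fin.val_succ, Fin.cases_succ, Fin.coe_castSucc]
    rcases Nat.lt_trichotomy (t : ℕ) i with h | h | h
    · rw [if_pos (by omega), if_pos h, ← Fin.succ_castSucc, Fin.cases_succ]
    · rw [if_neg (by omega), if_pos (by omega), if_neg (by omega), if_pos h,
        ← Fin.succ_castSucc, Fin.cases_succ]
    · rw [if_neg (by omega), if_neg (by omega), if_neg (by omega), if_neg (by omega)]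

lemma E2 (k : ℕ) (g : (Fin (k + 2) → A) → ℂ) :
    Etil (k + 1) (dtw σ (k + 1) g) = ((-1 : ℂ) ^ (k + 1)) • Tcyc σ (k + 1) g := by
  funext a
  simp only [Etil, dtw, Tcyc_apply, Pi.smul_apply, smul_eq_mul, ← mul_assoc, ← pow_add]
  rw [Even.neg_one_pow (by exact ⟨k+1, by ring⟩), one_mul]
  apply congrArg
  funext j
  induction j using Fin.cases with
  | zero =>
    rw [Fin.cases_zero,
      show Fin.last (k+2) = (Fin.last (k+1)).succ from rfl, Fin.cases_succ, Fin.cases_zero,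
      mul_one]
    rfl
  | succ t =>
    rw [Fin.cases_succ, ← Fin.succ_castSucc, Fin.cases_succ]
    rfl

lemma U1 (k i : ℕ) (hik : i ≤ k) (g : (Fin (k + 2) → A) → ℂ) :
    util (k + 1) (dfc (k + 1) i g) = dfc k i (util k g) := by
  funext a
  simp only [util, dfc]
  apply congrArg
  funext j
  induction j using Fin.lastCases with
  | last =>
    simp only [Fin.val_last]
    rw [if_neg (by omega), if_neg (by omega),
      show (Fin.last (k+1)).succ = Fin.last (k+2) from rfl, Fin.snoc_last, Fin.snoc_last]
  | cast t =>
    simp only [Fin.coe_castSucc, Fin.snoc_castSucc]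
    rcases Nat.lt_trichotomy (t : ℕ) i with h | h | h
    · rw [if_pos h, if_pos h]
    · rw [if_neg (by omega), if_pos h, if_neg (by omega), if_pos h, Fin.succ_castSucc,
        Fin.snoc_castSucc]
    · rw [if_neg (by omega), if_neg (by omega), if_neg (by omega), if_neg (by omega),
        Fin.succ_castSucc, Fin.snoc_castSucc]

lemma U2 (k : ℕ) (g : (Fin (k + 2) → A) → ℂ) :
    util (k + 1) (dfc (k + 1) (k + 1) g) = g := by
  funext a
  simp only [util, dfc]
  apply congrArg
  funext j
  induction j using Fin.lastCases with
  | last =>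
    simp only [Fin.val_last]
    simp only [if_true]
    rw [show (Fin.last (k+1)).succ = Fin.last (k+2) from rfl, Fin.snoc_last,
      show (Fin.last (k+1)).castSucc = ((Fin.last k).succ).castSucc from rfl,
      Fin.snoc_castSucc, mul_one, ite_self]
    congr 1
  | cast t =>
    simp only [Fin.coe_castSucc]
    rw [if_pos (by simpa using t.isLt), Fin.snoc_castSucc]

lemma U3 (k : ℕ) (g : (Fin (k + 2) → A) → ℂ) :
    util (k + 1) (dtw σ (k + 1) g) = g := by
  funext a
  simp only [util, dtw]
  apply congrArg
  funext j
  induction j using Fin.cases with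
  | zero =>
    rw [Fin.cases_zero, Fin.snoc_last, map_one, one_mul,
      show (0 : Fin (k+3)) = ((0 : Fin (k+2)).castSucc) from rfl, Fin.snoc_castSucc]
  | succ t =>
    rw [Fin.cases_succ, Fin.snoc_castSucc]

lemma F2 (k : ℕ) (z : (Fin (k + 2) → A) → ℂ) :
    Ucyc (k + 1) (Tcyc σ (k + 1) z) = Etil k z := by
  funext a
  simp only [Ucyc, Tcyc_apply, Etil, ← mul_assoc, ← pow_add]
  rw [Even.neg_one_pow (by exact ⟨k+1, by ring⟩), one_mul]
  apply congrArg
  funext j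
  induction j using Fin.cases with
  | zero =>
    rw [show (rotσ σ (k+1) (Fin.snoc a 1 : Fin (k+2) → A)) 0
        = σ ((Fin.snoc a 1 : Fin (k+2) → A) (Fin.last (k+1))) from rfl,
      Fin.snoc_last, map_one, Fin.cases_zero]
  | succ t =>
    rw [show (rotσ σ (k+1) (Fin.snoc a 1 : Fin (k+2) → A)) t.succ
        = (Fin.snoc a 1 : Fin (k+2) → A) t.castSucc from rfl,
      Fin.snoc_castSucc, Fin.cases_succ]

lemma Ucyc_sub (n : ℕ) (f g : (Fin (n + 1) → A) → ℂ) :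
    Ucyc n (f - g) = Ucyc n f - Ucyc n g := by
  funext a
  simp [Ucyc, mul_sub]

lemma util_eq (k : ℕ) (z : (Fin (k + 2) → A) → ℂ) :
    Ucyc (k + 1) z = ((-1 : ℂ) ^ (k + 1)) • util k z := by
  funext a
  simp [Ucyc, util, smul_eq_mul]

lemma U_split (k : ℕ) (z : (Fin (k + 2) → A) → ℂ) :
    Ucyc (k + 1) (Tcyc σ (k + 1) z - z)
      = Etil k z - ((-1 : ℂ) ^ (k + 1)) • util k z := by
  rw [Ucyc_sub, F2, util_eq]

lemma inv_sub {m : ℕ} (f g : (Fin m → A) → ℂ) (hf : TwistedInvariant σ f)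
    (hg : TwistedInvariant σ g) : TwistedInvariant σ (f - g) := by
  intro a
  simp [Pi.sub_apply, hf a, hg a]

lemma dfc_inv (k i : ℕ) (f : (Fin (k + 1) → A) → ℂ) (hf : TwistedInvariant σ f) :
    TwistedInvariant σ (dfc k i f) := by
  intro a
  simp only [dfc]
  rw [show (fun j : Fin (k+1) => if (j:ℕ) < i then (fun s => σ (a s)) j.castSucc
      else if (j:ℕ) = i then (fun s => σ (a s)) j.castSucc * (fun s => σ (a s)) j.succ
      else (fun s => σ (a s)) j.succ)
    = (fun j : Fin (k+1) => σ ((if (j:ℕ) < i then a j.castSucc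
      else if (j:ℕ) = i then a j.castSucc * a j.succ else a j.succ))) from ?_, hf]
  funext j
  split_ifs with h1 h2
  · rfl
  · simp [map_mul]
  · rfl

lemma dtw_inv (k : ℕ) (f : (Fin (k + 1) → A) → ℂ) (hf : TwistedInvariant σ f) :
    TwistedInvariant σ (dtw σ k f) := by
  intro a
  simp only [dtw]
  rw [show (Fin.cases (σ ((fun s => σ (a s)) (Fin.last (k+1))) * (fun s => σ (a s)) 0)
      (fun i : Fin k => (fun s => σ (a s)) i.succ.castSucc) : Fin (k+1) → A)
    = (fun j : Fin (k+1) => σ ((Fin.cases (σ (a (Fin.last (k+1))) * a 0)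
      (fun i : Fin k => a i.succ.castSucc) : Fin (k+1) → A) j)) from ?_, hf]
  funext j
  induction j using Fin.cases with
  | zero => simp [map_mul]
  | succ t => simp

lemma Ucyc_inv (n : ℕ) (f : (Fin (n + 1) → A) → ℂ) (hf : TwistedInvariant σ f) :
    TwistedInvariant σ (Ucyc n f) := by
  intro a
  simp only [Ucyc]
  rw [show (Fin.snoc (fun s => σ (a s)) 1 : Fin (n+1) → A)
    = (fun j => σ ((Fin.snoc a 1 : Fin (n+1) → A) j)) from ?_, hf]
  funext j
  induction j using Fin.lastCases with
  | last => simp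
  | cast t => simp

/-- all faces, twisted one at the top index -/
noncomputable def dAll (k j : ℕ) (f : (Fin (k + 1) → A) → ℂ) : (Fin (k + 2) → A) → ℂ :=
  if j < k + 1 then dfc k j f else dtw σ k f

/-- the twisted Hochschild coboundary -/
noncomputable def hb (k : ℕ) (f : (Fin (k + 1) → A) → ℂ) : (Fin (k + 2) → A) → ℂ :=
  fun a => ∑ j ∈ Finset.range (k + 2), (-1 : ℂ) ^ j * dAll σ k j f a

lemma T_dAll (k j : ℕ) (hj : j ≤ k) (x : (Fin (k + 1) → A) → ℂ) :
    Tcyc σ (k + 1) (dAll σ k (j + 1) x) = - dAll σ k j (Tcyc σ k x) := by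
  rcases Nat.lt_or_ge (j + 1) (k + 1) with h | h
  · rw [dAll, if_pos h, dAll, if_pos (by omega), F3 σ k j (by omega)]
  · have hjk : j = k := by omega
    subst hjk
    rw [dAll, if_neg (by omega), dAll, if_pos (by omega), F4tw]

lemma PT (k : ℕ) (x : (Fin (k + 1) → A) → ℂ) (hx : TwistedInvariant σ x) :
    ∀ i, i ≤ k + 1 → (Tcyc σ (k + 1))^[i + 1] (dfc k 0 ((Tcyc σ k)^[k + 1 - i] x))
      = ((-1 : ℂ) ^ (k + 1 - i)) • dAll σ k (k + 1 - i) x := by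
  intro i
  induction i generalizing x with
  | zero =>
    intro _
    simp only [Nat.sub_zero]
    rw [Tcyc_order σ k x hx, Function.iterate_one, BT, dAll, if_neg (by omega)]
  | succ i ih =>
    intro hi
    have hik : i ≤ k := by omega
    have hx' : TwistedInvariant σ ((Tcyc σ k)^[k] x) := Tcyc_iter_inv σ k x hx k
    have hstep : (Tcyc σ k)^[k + 1 - (i+1)] x = (Tcyc σ k)^[k + 1 - i] ((Tcyc σ k)^[k] x) := by
      rw [← Function.iterate_add_apply, show (k + 1 - i) + k = (k + 1 - (i+1)) + (k+1) by omega,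
        Function.iterate_add_apply, Tcyc_order σ k x hx]
    rw [hstep, Function.iterate_succ_apply']
    rw [ih ((Tcyc σ k)^[k] x) hx' (by omega)]
    rw [Tcyc_smul]
    rw [show k + 1 - i = (k - i) + 1 by omega, T_dAll σ k (k - i) (by omega)]
    rw [show Tcyc σ k ((Tcyc σ k)^[k] x) = (Tcyc σ k)^[k+1] x from
      (Function.iterate_succ_apply' _ _ _).symm, Tcyc_order σ k x hx]
    rw [show k + 1 - (i + 1) = k - i by omega, pow_succ, mul_comm ((-1:ℂ)^(k-i)) (-1),
      neg_one_mul, neg_smul, smul_neg, neg_neg]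

lemma PT' (k : ℕ) (x : (Fin (k + 1) → A) → ℂ) (hx : TwistedInvariant σ x) (j : ℕ)
    (hj : j ≤ k + 1) :
    (Tcyc σ (k + 1))^[k + 2 - j] (dfc k 0 ((Tcyc σ k)^[j] x))
      = ((-1 : ℂ) ^ j) • dAll σ k j x := by
  have h := PT σ k x hx (k + 1 - j) (by omega)
  rw [show k + 1 - (k + 1 - j) = j by omega, show (k + 1 - j) + 1 = k + 2 - j by omega] at h
  exact h

lemma V_eq (k : ℕ) (y : (Fin (k + 1) → A) → ℂ) :
    Vcyc σ k y = Tcyc σ (k + 1) (dfc k 0 y) := by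
  rw [BT]
  funext a
  simp [Vcyc, dtw, Pi.smul_apply, smul_eq_mul]

lemma bcyc_eq_hb (k : ℕ) (x : (Fin (k + 1) → A) → ℂ) (hx : TwistedInvariant σ x) :
    bcyc σ k x = hb σ k x := by
  funext a
  simp only [bcyc, hb]
  apply Finset.sum_congr rfl
  intro j hj
  have hj' : j ≤ k + 1 := by
    have := Finset.mem_range.mp hj; omega
  rw [V_eq]
  rw [show (Tcyc σ (k+1))^[k + 1 - j] (Tcyc σ (k+1) (dfc k 0 ((Tcyc σ k)^[j] x)))
      = (Tcyc σ (k+1))^[(k + 1 - j) + 1] (dfc k 0 ((Tcyc σ k)^[j] x)) from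
    (Function.iterate_succ_apply _ _ _).symm]
  rw [show (k + 1 - j) + 1 = k + 2 - j by omega, PT' σ k x hx j hj']
  simp [Pi.smul_apply, smul_eq_mul]

lemma dfc_comb (k i : ℕ) (c : ℂ) (x y : (Fin (k + 1) → A) → ℂ) :
    dfc k i (x - c • y) = dfc k i x - c • dfc k i y := by
  funext a
  simp [dfc, Pi.sub_apply, Pi.smul_apply]

lemma dtw_comb (k : ℕ) (c : ℂ) (x y : (Fin (k + 1) → A) → ℂ) :
    dtw σ k (x - c • y) = dtw σ k x - c • dtw σ k y := by
  funext a
  simp [dtw, Pi.sub_apply, Pi.smul_apply]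

lemma dAll_comb (k j : ℕ) (c : ℂ) (x y : (Fin (k + 1) → A) → ℂ) :
    dAll σ k j (x - c • y) = dAll σ k j x - c • dAll σ k j y := by
  unfold dAll
  split_ifs
  · exact dfc_comb k j c x y
  · exact dtw_comb σ k c x y

lemma hb_comb (k : ℕ) (c : ℂ) (x y : (Fin (k + 1) → A) → ℂ) :
    hb σ k (x - c • y) = hb σ k x - c • hb σ k y := by
  funext a
  simp only [hb, dAll_comb, Pi.sub_apply, Pi.smul_apply, smul_eq_mul, mul_sub,
    Finset.sum_sub_distrib, Finset.mul_sum]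
  congr 1
  apply Finset.sum_congr rfl
  intro j _
  ring

lemma star (k : ℕ) (g : (Fin (k + 2) → A) → ℂ) :
    Etil (k + 1) (hb σ (k + 1) g)
      = g - Tcyc σ (k + 1) g - hb σ k (Etil k g) + ((-1 : ℂ) ^ (k + 1)) • dtw σ k (Etil k g) := by
  funext a
  have hL : Etil (k + 1) (hb σ (k + 1) g) a
      = ∑ j ∈ Finset.range (k + 3), (-1 : ℂ) ^ j * (Etil (k + 1) (dAll σ (k + 1) j g)) a := rfl
  rw [hL, Finset.sum_range_succ' _ (k + 2), Finset.sum_range_succ _ (k + 1)]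
  have hmid : ∀ j, j < k + 1 →
      (-1 : ℂ) ^ (j + 1) * (Etil (k + 1) (dAll σ (k + 1) (j + 1) g)) a
        = -((-1 : ℂ) ^ j * dfc k j (Etil k g) a) := by
    intro j hj
    rw [dAll, if_pos (by omega), E1 k j (by omega), pow_succ]
    ring
  rw [Finset.sum_congr rfl (fun j hj => hmid j (Finset.mem_range.mp hj))]
  have htop : (-1 : ℂ) ^ (k + 1 + 1) * (Etil (k + 1) (dAll σ (k + 1) (k + 1 + 1) g)) a
      = -(Tcyc σ (k + 1) g a) := by
    rw [dAll, if_neg (by omega), E2]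
    simp only [Pi.smul_apply, smul_eq_mul, ← mul_assoc, ← pow_add]
    rw [Odd.neg_one_pow (by exact ⟨k + 1, by ring⟩), neg_one_mul]
  have hzero : (-1 : ℂ) ^ 0 * (Etil (k + 1) (dAll σ (k + 1) 0 g)) a = g a := by
    rw [dAll, if_pos (by omega), E0]
    simp
  rw [htop, hzero]
  have hRhb : hb σ k (Etil k g) a
      = (∑ j ∈ Finset.range (k + 1), (-1 : ℂ) ^ j * dfc k j (Etil k g) a)
        + (-1 : ℂ) ^ (k + 1) * dtw σ k (Etil k g) a := by
    rw [hb, Finset.sum_range_succ]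
    congr 1
    · apply Finset.sum_congr rfl
      intro j hj
      rw [dAll, if_pos (Finset.mem_range.mp hj)]
    · rw [dAll, if_neg (by omega)]
  simp only [Pi.add_apply, Pi.sub_apply, Pi.smul_apply, smul_eq_mul, hRhb,
    Finset.sum_neg_distrib]
  ring

lemma starstar (k : ℕ) (g : (Fin (k + 2) → A) → ℂ) :
    util (k + 1) (hb σ (k + 1) g)
      = hb σ k (util k g) - ((-1 : ℂ) ^ (k + 1)) • dtw σ k (util k g) := by
  funext a
  have hL : util (k + 1) (hb σ (k + 1) g) a
      = ∑ j ∈ Finset.range (k + 3), (-1 : ℂ) ^ j * (util (k + 1) (dAll σ (k + 1) j g)) a := rfl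
  rw [hL, Finset.sum_range_succ _ (k + 2), Finset.sum_range_succ _ (k + 1)]
  have hmid : ∀ j, j < k + 1 →
      (-1 : ℂ) ^ j * (util (k + 1) (dAll σ (k + 1) j g)) a
        = (-1 : ℂ) ^ j * dfc k j (util k g) a := by
    intro j hj
    rw [dAll, if_pos (by omega), U1 k j (by omega)]
  rw [Finset.sum_congr rfl (fun j hj => hmid j (Finset.mem_range.mp hj))]
  have h1 : (-1 : ℂ) ^ (k + 1) * (util (k + 1) (dAll σ (k + 1) (k + 1) g)) a
      = (-1 : ℂ) ^ (k + 1) * g a := by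
    rw [dAll, if_pos (by omega), U2]
  have h2 : (-1 : ℂ) ^ (k + 2) * (util (k + 1) (dAll σ (k + 1) (k + 2) g)) a
      = -((-1 : ℂ) ^ (k + 1) * g a) := by
    rw [dAll, if_neg (by omega), U3 σ k, pow_succ]
    ring
  rw [h1, h2]
  have hRhb : hb σ k (util k g) a
      = (∑ j ∈ Finset.range (k + 1), (-1 : ℂ) ^ j * dfc k j (util k g) a)
        + (-1 : ℂ) ^ (k + 1) * dtw σ k (util k g) a := by
    rw [hb, Finset.sum_range_succ]
    congr 1
    · apply Finset.sum_congr rfl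
      intro j hj
      rw [dAll, if_pos (Finset.mem_range.mp hj)]
    · rw [dAll, if_neg (by omega)]
  simp only [Pi.sub_apply, Pi.smul_apply, smul_eq_mul, hRhb]
  ring

lemma Tcyc_sum (k s : ℕ) (F : ℕ → (Fin (k + 1) → A) → ℂ) :
    Tcyc σ k (fun a => ∑ j ∈ Finset.range s, F j a)
      = fun a => ∑ j ∈ Finset.range s, Tcyc σ k (F j) a := by
  funext a
  simp [Tcyc_apply, Finset.mul_sum]

lemma Titer_sum (k s i : ℕ) (F : ℕ → (Fin (k + 1) → A) → ℂ) :
    (Tcyc σ k)^[i] (fun a => ∑ j ∈ Finset.range s, F j a)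
      = fun a => ∑ j ∈ Finset.range s, (Tcyc σ k)^[i] (F j) a := by
  induction i generalizing F with
  | zero => rfl
  | succ i ih =>
    rw [Function.iterate_succ_apply, Tcyc_sum, ih]
    funext a
    apply Finset.sum_congr rfl
    intro j _
    rw [← Function.iterate_succ_apply]

lemma Ncyc_sum (k s : ℕ) (F : ℕ → (Fin (k + 1) → A) → ℂ) :
    Ncyc σ k (fun a => ∑ j ∈ Finset.range s, F j a)
      = fun a => ∑ j ∈ Finset.range s, Ncyc σ k (F j) a := by
  funext a
  simp only [Ncyc_apply, Titer_sum]
  exact Finset.sum_comm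

lemma Titer_N (k i : ℕ) (x : (Fin (k + 1) → A) → ℂ) :
    (Tcyc σ k)^[i] (Ncyc σ k x) = Ncyc σ k ((Tcyc σ k)^[i] x) := by
  induction i generalizing x with
  | zero => rfl
  | succ i ih =>
    rw [Function.iterate_succ_apply, Function.iterate_succ_apply, ← ih]
    congr 1
    funext a
    simp only [Ncyc_apply, Tcyc_apply, Finset.mul_sum]
    apply Finset.sum_congr rfl
    intro j _
    rw [show (Tcyc σ k)^[j] (Tcyc σ k x) = (Tcyc σ k)^[j+1] x from
        (Function.iterate_succ_apply _ _ _).symm,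
      Function.iterate_succ_apply', Tcyc_apply]

lemma bN (k : ℕ) (x : (Fin (k + 1) → A) → ℂ) (hx : TwistedInvariant σ x) :
    bcyc σ k (Ncyc σ k x)
      = fun a => Ncyc σ (k + 1) (bcyc σ k x) a - Ncyc σ (k + 1) (dfc k 0 x) a := by
  funext a
  have hA : bcyc σ k (Ncyc σ k x) a = Ncyc σ (k + 1) (dfc k 0 (Ncyc σ k x)) a := by
    simp only [bcyc]
    have hterm : ∀ j, j < k + 2 →
        (Tcyc σ (k+1))^[k + 1 - j] (Vcyc σ k ((Tcyc σ k)^[j] (Ncyc σ k x))) a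
          = (Tcyc σ (k+1))^[k + 2 - j] (dfc k 0 (Ncyc σ k x)) a := by
      intro j hj
      rw [Titer_N, Ncyc_Titer σ k x hx j, V_eq,
        show (Tcyc σ (k+1))^[k + 1 - j] (Tcyc σ (k+1) (dfc k 0 (Ncyc σ k x)))
          = (Tcyc σ (k+1))^[(k + 1 - j) + 1] (dfc k 0 (Ncyc σ k x)) from
          (Function.iterate_succ_apply _ _ _).symm,
        show (k + 1 - j) + 1 = k + 2 - j by omega]
    rw [Finset.sum_congr rfl (fun j hj => hterm j (Finset.mem_range.mp hj))]
    have hinv : TwistedInvariant σ (dfc k 0 (Ncyc σ k x)) :=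
      dfc_inv σ k 0 _ (Ncyc_inv σ k x hx)
    calc ∑ j ∈ Finset.range (k + 2), (Tcyc σ (k+1))^[k + 2 - j] (dfc k 0 (Ncyc σ k x)) a
        = ∑ j ∈ Finset.range (k + 2),
            (fun t => (Tcyc σ (k+1))^[t + 1] (dfc k 0 (Ncyc σ k x)) a) (k + 2 - 1 - j) := by
          apply Finset.sum_congr rfl
          intro j hj
          have hj' := Finset.mem_range.mp hj
          show _ = (Tcyc σ (k+1))^[(k + 2 - 1 - j) + 1] (dfc k 0 (Ncyc σ k x)) a
          rw [show (k + 2 - 1 - j) + 1 = k + 2 - j by omega]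
      _ = ∑ j ∈ Finset.range (k + 2),
            (fun t => (Tcyc σ (k+1))^[t + 1] (dfc k 0 (Ncyc σ k x)) a) j :=
          Finset.sum_range_reflect (fun t => (Tcyc σ (k+1))^[t + 1] (dfc k 0 (Ncyc σ k x)) a)
            (k + 2)
      _ = Ncyc σ (k + 1) (Tcyc σ (k+1) (dfc k 0 (Ncyc σ k x))) a := by
          simp only [Ncyc_apply]
          apply Finset.sum_congr rfl
          intro j _
          show (Tcyc σ (k+1))^[j + 1] (dfc k 0 (Ncyc σ k x)) a = _
          rw [Function.iterate_succ_apply]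
      _ = Ncyc σ (k + 1) (dfc k 0 (Ncyc σ k x)) a := by rw [Ncyc_T σ (k+1) _ hinv]
  rw [hA]
  have hd0N : dfc k 0 (Ncyc σ k x)
      = fun a => ∑ q ∈ Finset.range (k + 1), dfc k 0 ((Tcyc σ k)^[q] x) a := rfl
  rw [hd0N, Ncyc_sum]
  have hB : Ncyc σ (k + 1) (bcyc σ k x) a
      = ∑ j ∈ Finset.range (k + 2), Ncyc σ (k + 1) (dfc k 0 ((Tcyc σ k)^[j] x)) a := by
    have hbc : bcyc σ k x = fun a => ∑ j ∈ Finset.range (k + 2),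
        (Tcyc σ (k+1))^[k + 1 - j] (Vcyc σ k ((Tcyc σ k)^[j] x)) a := rfl
    rw [hbc, Ncyc_sum]
    apply Finset.sum_congr rfl
    intro j _
    have hinvj : TwistedInvariant σ (Vcyc σ k ((Tcyc σ k)^[j] x)) := by
      rw [V_eq]
      exact Tcyc_inv σ (k+1) _ (dfc_inv σ k 0 _ (Tcyc_iter_inv σ k x hx j))
    rw [Ncyc_Titer σ (k+1) _ hinvj, V_eq,
      Ncyc_T σ (k+1) _ (dfc_inv σ k 0 _ (Tcyc_iter_inv σ k x hx j))]
  rw [hB, Finset.sum_range_succ, Tcyc_order σ k x hx]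
  ring

end S9

/-- Let `A` be a unital associative algebra over `ℂ` and `σ` an algebra
automorphism of `A`.  Then `B` and `b` anticommute on `σ`-invariant cochains: for every paper
index `N ≥ 1` (written `N = n + 1` below, so `f ∈ C^N` is an `(n+2)`-linear functional) and
every `σ`-invariant `f`, `B_{N+1}(b_N f) + b_{N-1}(B_N f) = 0`, where
`B_N = N_{N-1} U_N (T_N - I)` and `b_N = ∑_{j=0}^{N+1} T_{N+1}^{N+1-j} V_N T_N^j`
(`Bcyc σ m` is the paper's `B_{m+1}`). -/
theorem statement9 (σ : A ≃ₐ[ℂ] A) (n : ℕ)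
    (f : MultilinearMap ℂ (fun _ : Fin (n + 2) => A) ℂ) (hf : TwistedInvariant σ ⇑f) :
    Bcyc σ (n + 1) (bcyc σ (n + 1) ⇑f) + bcyc σ n (Bcyc σ n ⇑f) = 0 := by
  classical
  set F := (⇑f : (Fin (n + 2) → A) → ℂ) with hF
  have hf' : TwistedInvariant σ F := hf
  set c : ℂ := (-1 : ℂ) ^ (n + 1) with hc
  set E := S9.Etil n F with hE
  set U := S9.util n F with hU0
  set h' := E - c • U with hh'
  have hU : Ucyc (n + 1) (Tcyc σ (n + 1) F - F) = h' := S9.U_split σ n F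
  have hh'inv : TwistedInvariant σ h' := by
    rw [← hU]
    exact S9.Ucyc_inv σ (n + 1) _ (S9.inv_sub σ _ _ (S9.Tcyc_inv σ (n + 1) F hf') hf')
  have hdfcinv : TwistedInvariant σ (S9.dfc n 0 h') := S9.dfc_inv σ n 0 h' hh'inv
  have hT2 : bcyc σ n (Bcyc σ n F)
      = fun a => Ncyc σ (n + 1) (S9.hb σ n h') a - Ncyc σ (n + 1) (S9.dfc n 0 h') a := by
    rw [Bcyc, hU, S9.bN σ n h' hh'inv, S9.bcyc_eq_hb σ n h' hh'inv]
  have hInner : Ucyc (n + 2) (Tcyc σ (n + 2) (bcyc σ (n + 1) F) - bcyc σ (n + 1) F)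
      = (F - Tcyc σ (n + 1) F) - (S9.hb σ n h' - c • S9.dtw σ n h') := by
    rw [S9.U_split σ (n + 1) _, S9.bcyc_eq_hb σ (n + 1) F hf', S9.star σ n F,
      S9.starstar σ n F, hh', S9.hb_comb σ n c E U, S9.dtw_comb σ n c E U]
    funext a
    have hcc : (-1 : ℂ) ^ (n + 2) = -c := by rw [hc, pow_succ]; ring
    simp only [Pi.sub_apply, Pi.add_apply, Pi.smul_apply, smul_eq_mul, hcc, ← hc]
    ring
  have hT1 : Bcyc σ (n + 1) (bcyc σ (n + 1) F)
      = fun a => Ncyc σ (n + 1) (S9.dfc n 0 h') a - Ncyc σ (n + 1) (S9.hb σ n h') a := by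
    rw [Bcyc, hInner, S9.Ncyc_sub σ (n + 1) _ _, S9.Ncyc_sub σ (n + 1) _ _,
      S9.Ncyc_sub σ (n + 1) _ _, S9.Ncyc_T σ (n + 1) F hf', S9.Ncyc_smul σ (n + 1) c _,
      show c • Ncyc σ (n + 1) (S9.dtw σ n h') = Ncyc σ (n + 1) (c • S9.dtw σ n h') from
        (S9.Ncyc_smul σ (n + 1) c _).symm,
      ← S9.BT σ n h', S9.Ncyc_T σ (n + 1) _ hdfcinv]
    funext a
    simp only [Pi.sub_apply]
    ring
  rw [hT1, hT2]
  funext a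
  simp only [Pi.add_apply, Pi.zero_apply]
  ring
end

section
/- Fix 0 < q < 1 and a positive integer r with q^{2r} < 1/2 < q^{2r−2}. Let x be a square-summable function on I = {(k,l) ∈ ℕ × ℕ : l ≤ k} such that for every (k,l) ∈ I, c(k,l)·x(k,l) + d(k−1,l−1)·x(k−1,l−1) = 0, where the second summand is interpreted as 0 when k = 0 or l = 0. Then x = 0. (Equivalently, the operator A of the paper, acting on the Hilbert space ℓ²(I) by A f_{k,l} = c(k,l) f_{k,l} + d(k,l) f_{k+1,l+1} on the orthonormal basis (f_{k,l}), has trivial kernel.) -/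
/-- The index set `I = {(k,l) ∈ ℕ × ℕ : l ≤ k}` labelling the orthonormal basis of the
subspace `ℋ₀` of `L²(SU_q(2))` (the pair `(k,l)` encodes `e^n_{n,j}` with `n = k/2`,
`j = (k-2l)/2`). -/
def IndexSet : Type := { p : ℕ × ℕ // p.2 ≤ p.1 }

/-- The diagonal coefficient `c(k,l) = 1 - q^(2r(k-l)) (1 - q^(2l))^r` of the operator `A`. -/
noncomputable def cCoeff (q : ℝ) (r k l : ℕ) : ℝ :=
  1 - q ^ (2 * r * (k - l)) * (1 - q ^ (2 * l)) ^ r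

/-- The off-diagonal coefficient
`d(k,l) = -q^((k-l)(2r+1)) (1 - q^(2l))^r (1 - q^(2(l-1)))^(1/2)` for `l ≥ 1`, `d(k,0) = 0`,
of the operator `A`. -/
noncomputable def dCoeff (q : ℝ) (r k l : ℕ) : ℝ :=
  if l = 0 then 0
  else -(q ^ ((k - l) * (2 * r + 1))) * (1 - q ^ (2 * l)) ^ r *
    Real.sqrt (1 - q ^ (2 * (l - 1)))

/-- Fix `0 < q < 1` and a positive integer `r` with
`q^(2r) < 1/2 < q^(2r-2)`.  Let `x` be a square-summable function on
`I = {(k,l) ∈ ℕ × ℕ : l ≤ k}` such that for every `(k,l) ∈ I`,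
`c(k,l)·x(k,l) + d(k-1,l-1)·x(k-1,l-1) = 0` (the second summand being `0` when `k = 0` or
`l = 0`, which is automatic here since `dCoeff q r (k-1) 0 = 0` and `l ≤ k`).  Then `x = 0`;
i.e. the operator `A` of the paper, given on the orthonormal basis by
`A f_{k,l} = c(k,l) f_{k,l} + d(k,l) f_{k+1,l+1}`, has trivial kernel. -/
theorem statement10 (q : ℝ) (hq0 : 0 < q) (hq1 : q < 1) (r : ℕ) (hr : 0 < r)
    (hr1 : q ^ (2 * r) < 1 / 2) (hr2 : 1 / 2 < q ^ (2 * r - 2))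
    (x : IndexSet → ℂ) (hx : Memℓp x 2)
    (hker : ∀ (k l : ℕ) (h : l ≤ k),
      (cCoeff q r k l : ℂ) * x ⟨(k, l), h⟩ +
        (dCoeff q r (k - 1) (l - 1) : ℂ) * x ⟨(k - 1, l - 1), by omega⟩ = 0) :
    x = 0 := by

  have hckl : ∀ k l : ℕ, cCoeff q r k l ≠ 0 := by
    intro k l
    have hq2l : q ^ (2 * l) ≤ 1 := pow_le_one₀ hq0.le hq1.le
    have hprod : q ^ (2 * r * (k - l)) * (1 - q ^ (2 * l)) ^ r < 1 := by
      rcases Nat.eq_zero_or_pos l with hl | hl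
      · subst hl
        simp [pow_eq_zero_iff hr.ne', zero_pow hr.ne']
      · have h1 : (0:ℝ) < q ^ (2 * l) := pow_pos hq0 _
        have h2 : q ^ (2 * l) < 1 := pow_lt_one₀ hq0.le hq1 (by omega)
        have h3 : (1 - q ^ (2 * l)) ^ r < 1 :=
          pow_lt_one₀ (by linarith) (by linarith) hr.ne'
        have h4 : q ^ (2 * r * (k - l)) ≤ 1 := pow_le_one₀ hq0.le hq1.le
        have h5 : (0:ℝ) ≤ (1 - q ^ (2 * l)) ^ r := pow_nonneg (by linarith) r
        nlinarith
    unfold cCoeff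
    intro h
    nlinarith
  have key : ∀ l k (h : l ≤ k), x ⟨(k, l), h⟩ = 0 := by
    intro l
    induction l with
    | zero =>
      intro k h
      have h0 := hker k 0 h
      rw [show dCoeff q r (k - 1) (0 - 1) = 0 from rfl] at h0
      simp only [Complex.ofReal_zero, zero_mul, add_zero] at h0
      rcases mul_eq_zero.1 h0 with h' | h'
      · exact absurd (Complex.ofReal_eq_zero.1 h') (hckl k 0)
      · exact h'
    | succ l ih =>
      intro k h
      have h0 := hker k (l + 1) h
      have hx0 : x ⟨(k - 1, l + 1 - 1), by omega⟩ = 0 := by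
        have : (⟨(k - 1, l + 1 - 1), by omega⟩ : IndexSet) = ⟨(k - 1, l), by omega⟩ := rfl
        rw [this]
        exact ih (k - 1) (by omega)
      rw [hx0, mul_zero, add_zero] at h0
      rcases mul_eq_zero.1 h0 with h' | h'
      · exact absurd (Complex.ofReal_eq_zero.1 h') (hckl k (l + 1))
      · exact h'
  funext p
  obtain ⟨⟨k, l⟩, hl⟩ := p
  exact key l k hl
end

section
/- Fix 0 < q < 1 and a positive integer r with q^{2r} < 1/2 < q^{2r−2}. Define the sequence (p_k)_{k ≥ 1} by p_1 = 1 and p_{k+1} = [1 − (1 − q^{2k})^r] / [(1 − q^{2k+2})^r · (1 − q^{2k})^{1/2}] · p_k for k ≥ 1. Then Σ_{k ≥ 1} p_k² < ∞; equivalently, the vector ξ on I = {(k,l) ∈ ℕ × ℕ : l ≤ k} given by ξ(k,k) = p_k for k ≥ 1 and ξ(k,l) = 0 otherwise belongs to ℓ²(I). -/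
/-- The sequence `(p_k)` of the paper: `p_1 = 1` and, for `k ≥ 1`,
`p_{k+1} = [1 - (1 - q^(2k))^r] / [(1 - q^(2k+2))^r (1 - q^(2k))^(1/2)] · p_k`
(we also set `p_0 = 0`, matching `ξ(0,0) = 0`). -/
noncomputable def pSeq (q : ℝ) (r : ℕ) : ℕ → ℝ
  | 0 => 0
  | 1 => 1
  | (k + 2) =>
    (1 - (1 - q ^ (2 * (k + 1))) ^ r) /
        ((1 - q ^ (2 * (k + 1) + 2)) ^ r * Real.sqrt (1 - q ^ (2 * (k + 1)))) *
      pSeq q r (k + 1)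


section Aux

variable {q : ℝ}

lemma pSeq_pos (hq0 : 0 < q) (hq1 : q < 1) {r : ℕ} (hr : 0 < r) :
    ∀ k : ℕ, 0 < pSeq q r (k + 1) := by
  intro k
  induction k with
  | zero => simp [pSeq]
  | succ k ih =>
    have hqk : 0 < q ^ (2 * (k + 1)) := pow_pos hq0 _
    have hqk1 : q ^ (2 * (k + 1)) < 1 := pow_lt_one₀ hq0.le hq1 (by omega)
    have hnum : 0 < 1 - (1 - q ^ (2 * (k + 1))) ^ r := by
      have : (1 - q ^ (2 * (k + 1))) ^ r < 1 :=
        pow_lt_one₀ (by linarith) (by linarith) hr.ne'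
      linarith
    have hqk2 : q ^ (2 * (k + 1) + 2) < 1 := pow_lt_one₀ hq0.le hq1 (by omega)
    have hden : 0 < (1 - q ^ (2 * (k + 1) + 2)) ^ r * Real.sqrt (1 - q ^ (2 * (k + 1))) := by
      apply mul_pos (pow_pos (by linarith) _) (Real.sqrt_pos.mpr (by linarith))
    show 0 < _ / _ * pSeq q r (k + 1)
    exact mul_pos (div_pos hnum hden) ih

lemma summable_pSeq_sq (hq0 : 0 < q) (hq1 : q < 1) {r : ℕ} (hr : 0 < r) :
    Summable fun k : ℕ => (pSeq q r (k + 1)) ^ 2 := by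
  set g : ℝ → ℝ := fun t =>
    ((1 - (1 - t) ^ r) / ((1 - q ^ 2 * t) ^ r * Real.sqrt (1 - t))) ^ 2 with hg
  have hc : ContinuousAt g 0 := by
    apply ContinuousAt.pow
    apply ContinuousAt.div
    · fun_prop
    · fun_prop
    · simp
  have h0 : g 0 = 0 := by simp [hg, hr.ne']
  have h1 : Filter.Tendsto (fun k : ℕ => q ^ (2 * (k + 1))) Filter.atTop (nhds 0) := by
    have h2 := tendsto_pow_atTop_nhds_zero_of_lt_one hq0.le hq1
    exact h2.comp (Filter.tendsto_atTop_atTop.mpr (fun b => ⟨b, fun a ha => by omega⟩))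
  have htend : Filter.Tendsto (fun k : ℕ => g (q ^ (2 * (k + 1)))) Filter.atTop (nhds 0) := by
    rw [← h0]; exact hc.tendsto.comp h1
  apply summable_of_ratio_test_tendsto_lt_one (l := 0) one_pos
  · exact Filter.Eventually.of_forall fun k => by
      have := pSeq_pos hq0 hq1 hr k; positivity
  · convert htend using 2 with k
    have hp := pSeq_pos hq0 hq1 hr k
    have hps : pSeq q r (k + 1 + 1) =
        (1 - (1 - q ^ (2 * (k + 1))) ^ r) /
          ((1 - q ^ (2 * (k + 1) + 2)) ^ r * Real.sqrt (1 - q ^ (2 * (k + 1)))) *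
        pSeq q r (k + 1) := rfl
    have hq2 : q ^ (2 * (k + 1) + 2) = q ^ 2 * q ^ (2 * (k + 1)) := by ring
    rw [Real.norm_eq_abs, Real.norm_eq_abs, abs_of_nonneg (sq_nonneg _),
      abs_of_nonneg (sq_nonneg _), hps, mul_pow, mul_div_assoc,
      div_self (pow_ne_zero 2 hp.ne'), mul_one, hq2]

end Aux

/-- Fix `0 < q < 1` and a positive integer `r` with
`q^(2r) < 1/2 < q^(2r-2)`.  Define `(p_k)_{k ≥ 1}` by `p_1 = 1` and
`p_{k+1} = [1 - (1 - q^(2k))^r] / [(1 - q^(2k+2))^r (1 - q^(2k))^(1/2)] · p_k` for `k ≥ 1`.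
Then `∑_{k ≥ 1} p_k² < ∞`; equivalently, the vector `ξ` on `I = {(k,l) ∈ ℕ × ℕ : l ≤ k}` with
`ξ(k,k) = p_k` for `k ≥ 1` and `ξ(k,l) = 0` otherwise belongs to `ℓ²(I)`. -/


theorem statement12 (q : ℝ) (hq0 : 0 < q) (hq1 : q < 1) (r : ℕ) (hr : 0 < r)
    (hr1 : q ^ (2 * r) < 1 / 2) (hr2 : 1 / 2 < q ^ (2 * r - 2)) :
    (Summable fun k : ℕ => (pSeq q r (k + 1)) ^ 2) ∧
      Memℓp (fun i : IndexSet =>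
        (if i.1.2 = i.1.1 then (pSeq q r i.1.1 : ℂ) else 0)) 2 := by
  constructor
  · exact summable_pSeq_sq hq0 hq1 hr
  · apply memℓp_gen
    have hsum : Summable fun k : ℕ => pSeq q r k ^ 2 :=
      (summable_nat_add_iff 1).mp (by simpa using summable_pSeq_sq hq0 hq1 hr)
    have htwo : ((2 : ENNReal)).toReal = (2 : ℝ) := by norm_num
    rw [htwo]
    have hinj : Function.Injective (fun k : ℕ => (⟨(k, k), le_refl k⟩ : IndexSet)) := by
      intro a b h
      simpa using congrArg (fun i : IndexSet => i.1.1) h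
    rw [← Function.Injective.summable_iff (β := IndexSet) hinj]
    · apply hsum.congr
      intro k
      show pSeq q r k ^ 2 =
        ‖(if ((⟨(k, k), le_refl k⟩ : IndexSet)).1.2 = ((⟨(k, k), le_refl k⟩ : IndexSet)).1.1
          then (pSeq q r ((⟨(k, k), le_refl k⟩ : IndexSet)).1.1 : ℂ) else 0)‖ ^ (2 : ℝ)
      rw [if_pos rfl, Complex.norm_real, Real.norm_eq_abs,
        show ((2 : ℝ)) = ((2 : ℕ) : ℝ) by norm_num, Real.rpow_natCast, sq_abs]
    · rintro ⟨⟨k, l⟩, hkl⟩ hx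
      have hne : l ≠ k := by
        intro h
        subst h
        exact hx ⟨l, rfl⟩
      show ‖(if l = k then (pSeq q r k : ℂ) else 0)‖ ^ (2 : ℝ) = 0
      rw [if_neg hne, norm_zero]
      exact Real.zero_rpow (by norm_num)
end
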